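/- Let β(ω) = (1+|ω|)^{-1} for ω ∈ ℝ, and let u : ℝ → ℝ be given by u(z) = (1−z)(1+z) for |z| ≤ 1 and u(z) = 0 for |z| > 1. Then for every ξ ∈ ℝ: ∫_ℝ u(β(ω)(ξ−ω)) β(ω) dω = 3 − ξ² if |ξ| ≤ 1, and = 2 if |ξ| > 1. (This computes the symbol m_{Ψ,Φ}(ξ) = ∫_ℝ conj(ψ̂(β(ω)(ξ−ω))) φ̂(β(ω)(ξ−ω)) β(ω) dω for the windows ψ̂(z) = (1−z)·χ_{[−1,1]}(z) and φ̂(z) = (1+z)·χ_{[−1,1]}(z); in particular 2 ≤ m_{Ψ,Φ}(ξ) ≤ 3 for all ξ, so these windows generate a reproducing pair for the affine Weyl–Heisenberg system with η(ω) = ω, β(ω) = (1+|ω|)^{-1}, s = 1.) -/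

import Mathlib

open MeasureTheory

/-- The scale function `β(ω) = (1+|ω|)⁻¹`. -/
noncomputable def betaFn (ω : ℝ) : ℝ := (1 + |ω|)⁻¹

/-- `u(z) = (1-z)(1+z)` for `|z| ≤ 1` and `u(z) = 0` otherwise, i.e.
`u = conj(ψ̂) · φ̂` for the windows `ψ̂(z) = (1-z) χ_{[-1,1]}(z)`,
`φ̂(z) = (1+z) χ_{[-1,1]}(z)`. -/
noncomputable def uFn (z : ℝ) : ℝ := if |z| ≤ 1 then (1 - z) * (1 + z) else 0

open Set Filter Topology

/-- The integrand. -/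
noncomputable def fFn (ξ ω : ℝ) : ℝ := uFn (betaFn ω * (ξ - ω)) * betaFn ω

lemma uFn_nonneg (z : ℝ) : 0 ≤ uFn z := by
  unfold uFn
  split_ifs with h
  · rcases abs_le.mp h with ⟨h1, h2⟩
    nlinarith
  · exact le_rfl

lemma uFn_even (z : ℝ) : uFn (-z) = uFn z := by
  unfold uFn
  rw [abs_neg]
  split_ifs with h
  · ring
  · rfl

lemma uFn_eq_zero {z : ℝ} (h : 1 ≤ |z|) : uFn z = 0 := by
  unfold uFn
  split_ifs with h'
  · have hz : |z| = 1 := le_antisymm h' h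
    rcases abs_eq (by norm_num : (0:ℝ) ≤ 1) |>.mp hz with rfl | rfl <;> ring
  · rfl

lemma betaFn_even (ω : ℝ) : betaFn (-ω) = betaFn ω := by
  unfold betaFn; rw [abs_neg]

lemma betaFn_pos (ω : ℝ) : 0 < betaFn ω := by
  unfold betaFn
  positivity

lemma fFn_nonneg (ξ ω : ℝ) : 0 ≤ fFn ξ ω :=
  mul_nonneg (uFn_nonneg _) (betaFn_pos _).le

lemma fFn_neg (ξ ω : ℝ) : fFn ξ (-ω) = fFn (-ξ) ω := by
  unfold fFn
  rw [betaFn_even]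
  have : betaFn ω * (ξ - -ω) = -(betaFn ω * (-ξ - ω)) := by ring
  rw [this, uFn_even]

lemma betaFn_of_nonneg {ω : ℝ} (h : 0 ≤ ω) : betaFn ω = (1 + ω)⁻¹ := by
  unfold betaFn; rw [abs_of_nonneg h]

/-- The explicit formula for `fFn` on the supported part of the right half line. -/
lemma fFn_eq {ξ ω : ℝ} (hξ : -1 ≤ ξ) (h0 : 0 ≤ ω) (h : (ξ - 1) / 2 ≤ ω) :
    fFn ξ ω = 2 * (1 + ξ) * ((1 + ω) ^ 2)⁻¹ - (1 + ξ) ^ 2 * ((1 + ω) ^ 3)⁻¹ := by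
  have ht : (0:ℝ) < 1 + ω := by linarith
  have habs : |(1 + ω)⁻¹ * (ξ - ω)| ≤ 1 := by
    rw [abs_mul, abs_inv, abs_of_pos ht]
    have h1 : |ξ - ω| ≤ 1 + ω := abs_le.mpr ⟨by linarith, by linarith⟩
    calc (1 + ω)⁻¹ * |ξ - ω| ≤ (1 + ω)⁻¹ * (1 + ω) :=
          mul_le_mul_of_nonneg_left h1 (inv_nonneg.mpr ht.le)
      _ = 1 := inv_mul_cancel₀ ht.ne'
  unfold fFn uFn
  rw [betaFn_of_nonneg h0, if_pos habs]
  field_simp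
  ring

lemma fFn_zero_right {ξ ω : ℝ} (h0 : 0 ≤ ω) (h : 1 + 2 * ω ≤ ξ) : fFn ξ ω = 0 := by
  have ht : (0:ℝ) < 1 + ω := by linarith
  have h1 : (1:ℝ) ≤ (1 + ω)⁻¹ * (ξ - ω) := by
    calc (1:ℝ) = (1 + ω)⁻¹ * (1 + ω) := (inv_mul_cancel₀ ht.ne').symm
      _ ≤ (1 + ω)⁻¹ * (ξ - ω) :=
          mul_le_mul_of_nonneg_left (by linarith) (inv_nonneg.mpr ht.le)
  unfold fFn
  rw [betaFn_of_nonneg h0, uFn_eq_zero (le_trans h1 (le_abs_self _)), zero_mul]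

lemma fFn_zero_left {ξ ω : ℝ} (hξ : ξ ≤ -1) (h0 : 0 ≤ ω) : fFn ξ ω = 0 := by
  have ht : (0:ℝ) < 1 + ω := by linarith
  have h1 : (1 + ω)⁻¹ * (ξ - ω) ≤ -1 := by
    calc (1 + ω)⁻¹ * (ξ - ω) ≤ (1 + ω)⁻¹ * (-(1 + ω)) :=
          mul_le_mul_of_nonneg_left (by linarith) (inv_nonneg.mpr ht.le)
      _ = -1 := by rw [mul_neg, inv_mul_cancel₀ ht.ne']
  have h2 : (1:ℝ) ≤ |(1 + ω)⁻¹ * (ξ - ω)| :=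
    le_trans (by linarith [h1] : (1:ℝ) ≤ -((1 + ω)⁻¹ * (ξ - ω))) (neg_le_abs _)
  unfold fFn
  rw [betaFn_of_nonneg h0, uFn_eq_zero h2, zero_mul]

/-- The antiderivative. -/
noncomputable def Fant (c ω : ℝ) : ℝ := -2 * c * (1 + ω)⁻¹ + c ^ 2 / 2 * ((1 + ω)⁻¹) ^ 2

lemma hasDerivAt_Fant (c : ℝ) {ω : ℝ} (h : (0:ℝ) < 1 + ω) :
    HasDerivAt (Fant c) (2 * c * ((1 + ω) ^ 2)⁻¹ - c ^ 2 * ((1 + ω) ^ 3)⁻¹) ω := by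
  have h1 : HasDerivAt (fun ω : ℝ => 1 + ω) 1 ω := (hasDerivAt_id ω).const_add 1
  have hinv : HasDerivAt (fun ω : ℝ => (1 + ω)⁻¹) (-1 / (1 + ω) ^ 2) ω := h1.inv h.ne'
  have hsq : HasDerivAt (fun ω : ℝ => ((1 + ω)⁻¹) ^ 2)
      ((2 : ℕ) * ((1 + ω)⁻¹) ^ 1 * (-1 / (1 + ω) ^ 2)) ω := hinv.pow 2
  have := (hinv.const_mul (-2 * c)).add (hsq.const_mul (c ^ 2 / 2))
  refine this.congr_deriv ?_
  field_simp
  ring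

lemma tendsto_Fant (c : ℝ) : Tendsto (Fant c) atTop (𝓝 0) := by
  have h1 : Tendsto (fun ω : ℝ => (1 + ω)⁻¹) atTop (𝓝 0) :=
    tendsto_inv_atTop_zero.comp (tendsto_atTop_add_const_left _ 1 tendsto_id)
  have : Tendsto (Fant c) atTop (𝓝 (-2 * c * 0 + c ^ 2 / 2 * 0 ^ 2)) :=
    ((h1.const_mul (-2 * c)).add ((h1.pow 2).const_mul (c ^ 2 / 2)))
  simpa using this

/-- Key half-line computation. -/
lemma J_eq {ξ a : ℝ} (hξ : -1 ≤ ξ) (ha0 : 0 ≤ a) (ha : (ξ - 1) / 2 ≤ a) :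
    (∫ ω in Ioi a, fFn ξ ω)
      = 2 * (1 + ξ) * (1 + a)⁻¹ - (1 + ξ) ^ 2 / 2 * ((1 + a)⁻¹) ^ 2 ∧
    IntegrableOn (fFn ξ) (Ioi a) := by
  have hta : (0:ℝ) < 1 + a := by linarith
  have hderiv : ∀ x ∈ Ioi a, HasDerivAt (Fant (1 + ξ)) (fFn ξ x) x := by
    intro x hx
    have hx' : a < x := hx
    have h0 : (0:ℝ) ≤ x := le_trans ha0 hx'.le
    rw [fFn_eq hξ h0 (le_trans ha hx'.le)]
    exact hasDerivAt_Fant (1 + ξ) (by linarith)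
  have hcont : ContinuousWithinAt (Fant (1 + ξ)) (Ici a) a :=
    (hasDerivAt_Fant (1 + ξ) hta).continuousAt.continuousWithinAt
  have hpos : ∀ x ∈ Ioi a, 0 ≤ fFn ξ x := fun x _ => fFn_nonneg ξ x
  refine ⟨?_, integrableOn_Ioi_deriv_of_nonneg hcont hderiv hpos (tendsto_Fant (1 + ξ))⟩
  rw [integral_Ioi_of_hasDerivAt_of_nonneg hcont hderiv hpos (tendsto_Fant (1 + ξ))]
  unfold Fant
  ring

/-- Half-line integral: main case `-1 ≤ ξ ≤ 1`. -/
lemma J_main {ξ : ℝ} (hξ1 : -1 ≤ ξ) (hξ2 : ξ ≤ 1) :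
    (∫ ω in Ioi 0, fFn ξ ω) = (1 + ξ) * (3 - ξ) / 2 ∧ IntegrableOn (fFn ξ) (Ioi 0) := by
  obtain ⟨h1, h2⟩ := J_eq hξ1 (le_refl (0:ℝ)) (by linarith : (ξ - 1) / 2 ≤ 0)
  refine ⟨?_, h2⟩
  rw [h1]; norm_num; ring

/-- Half-line integral: case `ξ > 1`. -/
lemma J_big {ξ : ℝ} (hξ : 1 < ξ) :
    (∫ ω in Ioi 0, fFn ξ ω) = 2 ∧ IntegrableOn (fFn ξ) (Ioi 0) := by
  set a : ℝ := (ξ - 1) / 2 with ha_def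
  have ha0 : 0 ≤ a := by simp only [ha_def]; linarith
  have hzero : ∀ x ∈ Ioc (0:ℝ) a, fFn ξ x = 0 := by
    intro x hx
    exact fFn_zero_right hx.1.le (by simp only [ha_def] at hx ⊢; linarith [hx.2])
  obtain ⟨h1, h2⟩ := J_eq (by linarith : (-1:ℝ) ≤ ξ) ha0 le_rfl
  have hsub : ∫ ω in Ioi (0:ℝ), fFn ξ ω = ∫ ω in Ioi a, fFn ξ ω := by
    refine setIntegral_eq_of_subset_of_forall_diff_eq_zero measurableSet_Ioi
      (Ioi_subset_Ioi ha0) ?_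
    intro x hx
    rw [Ioi_diff_Ioi] at hx
    exact hzero x hx
  have hta : 1 + a = (1 + ξ) / 2 := by simp only [ha_def]; ring
  constructor
  · rw [hsub, h1, hta]
    have hne : (1 + ξ) / 2 ≠ 0 := by intro h; rw [div_eq_zero_iff] at h; rcases h with h | h <;> linarith
    field_simp
    ring
  · have hIoc : IntegrableOn (fFn ξ) (Ioc 0 a) := by
      refine (integrableOn_zero (μ := volume)).congr_fun (fun x hx => (hzero x hx).symm)
        measurableSet_Ioc
    have := hIoc.union h2
    rwa [Ioc_union_Ioi_eq_Ioi ha0] at this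

/-- Half-line integral: case `ξ ≤ -1`. -/
lemma J_left {ξ : ℝ} (hξ : ξ ≤ -1) :
    (∫ ω in Ioi 0, fFn ξ ω) = 0 ∧ IntegrableOn (fFn ξ) (Ioi 0) := by
  have hz : ∀ x ∈ Ioi (0:ℝ), fFn ξ x = 0 := fun x hx => fFn_zero_left hξ hx.out.le
  constructor
  · rw [setIntegral_congr_fun measurableSet_Ioi hz, integral_zero]
  · exact (integrableOn_zero (μ := volume)).congr_fun (fun x hx => (hz x hx).symm)
      measurableSet_Ioi

lemma total (ξ : ℝ) (h1 : IntegrableOn (fFn ξ) (Ioi 0))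
    (h2 : IntegrableOn (fFn (-ξ)) (Ioi 0)) :
    (∫ ω, fFn ξ ω) = (∫ ω in Ioi 0, fFn (-ξ) ω) + (∫ ω in Ioi 0, fFn ξ ω) := by
  have heq : ∀ x : ℝ, fFn ξ x = fFn (-ξ) (-x) := by
    intro x; rw [fFn_neg, neg_neg]
  have hIic : ∫ x in Iic (0:ℝ), fFn ξ x = ∫ x in Ioi (0:ℝ), fFn (-ξ) x := by
    calc ∫ x in Iic (0:ℝ), fFn ξ x = ∫ x in Iic (0:ℝ), fFn (-ξ) (-x) := by
          exact setIntegral_congr_fun measurableSet_Iic fun x _ => heq x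
      _ = ∫ x in Ioi (-(0:ℝ)), fFn (-ξ) x := integral_comp_neg_Iic 0 (fFn (-ξ))
      _ = ∫ x in Ioi (0:ℝ), fFn (-ξ) x := by norm_num
  have A : MeasurableEmbedding (fun x : ℝ => -x) :=
    (Homeomorph.neg ℝ).isClosedEmbedding.measurableEmbedding
  have hIicInt : IntegrableOn (fFn ξ) (Iic 0) := by
    have hmap : (volume : Measure ℝ) = Measure.map (fun x : ℝ => -x) volume :=
      (Measure.map_neg_eq_self (volume : Measure ℝ)).symm
    rw [IntegrableOn, hmap, ← IntegrableOn, A.integrableOn_map_iff]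
    have hpre : (fun x : ℝ => -x) ⁻¹' Iic 0 = Ici 0 := by
      ext x; simp
    rw [hpre]
    have hcomp : (fFn ξ) ∘ (fun x : ℝ => -x) = fFn (-ξ) := by
      funext x; exact fFn_neg ξ x
    rw [hcomp]
    exact h2.congr_set_ae (Ioi_ae_eq_Ici (a := (0:ℝ))).symm
  rw [← hIic]; exact (intervalIntegral.integral_Iic_add_Ioi hIicInt h1).symm

theorem stmt_17 :
    ∀ ξ : ℝ,
      (∫ ω : ℝ, uFn (betaFn ω * (ξ - ω)) * betaFn ω)
        = if |ξ| ≤ 1 then 3 - ξ ^ 2 else 2 := by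
  intro ξ
  have hint : ∀ ζ : ℝ, IntegrableOn (fFn ζ) (Ioi 0) := by
    intro ζ
    rcases le_or_gt ζ (-1) with h | h
    · exact (J_left h).2
    rcases le_or_gt ζ 1 with h' | h'
    · exact (J_main h.le h').2
    · exact (J_big h').2
  have hI : (∫ ω : ℝ, uFn (betaFn ω * (ξ - ω)) * betaFn ω) = ∫ ω, fFn ξ ω := rfl
  rw [hI, total ξ (hint ξ) (hint (-ξ))]
  by_cases hξ : |ξ| ≤ 1
  · obtain ⟨hl, hr⟩ := abs_le.mp hξ
    rw [(J_main hl hr).1, (J_main (by linarith : (-1:ℝ) ≤ -ξ) (by linarith : -ξ ≤ 1)).1,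
      if_pos hξ]
    ring
  · rw [if_neg hξ]
    push_neg at hξ
    rcases lt_abs.mp hξ with h | h
    · rw [(J_big h).1, (J_left (by linarith : -ξ ≤ -1)).1]; ring
    · rw [(J_left (by linarith : ξ ≤ -1)).1, (J_big (by linarith : 1 < -ξ)).1]; ring
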